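/- Let B₃ be the group with presentation ⟨x, y ∥ x y x = y x y⟩. Then B₃ has a proper subgroup (in fact a normal subgroup of index 6) isomorphic to the direct product ℤ × F₂, where F₂ is the free group of rank 2. -/

import Mathlib

/-- The single braid relator `x y x (y x y)⁻¹` in the free group on two generators. -/
def braidRel3 : FreeGroup (Fin 2) :=
  FreeGroup.of 0 * FreeGroup.of 1 * FreeGroup.of 0 *
    (FreeGroup.of 1 * FreeGroup.of 0 * FreeGroup.of 1)⁻¹

/-- The braid group on 3 strands `B₃ = ⟨x, y ∥ x y x = y x y⟩`. -/
def BraidGroup3 : Type := PresentedGroup ({braidRel3} : Set (FreeGroup (Fin 2)))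

instance : Group BraidGroup3 := by unfold BraidGroup3; infer_instance

namespace B3x
abbrev F2 := FreeGroup (Fin 2)
def a : F2 := FreeGroup.of 0
def b : F2 := FreeGroup.of 1
def u : F2 := b⁻¹ * a * b * a⁻¹

def σh : F2 →* F2 := FreeGroup.lift ![b, a⁻¹ * b]
def τh : F2 →* F2 := FreeGroup.lift ![a * b⁻¹, a]

lemma τσ : τh.comp σh = MonoidHom.id F2 := by
  apply FreeGroup.ext_hom; intro i; fin_cases i <;> simp [σh, τh, a, b]

lemma στ : σh.comp τh = MonoidHom.id F2 := by
  apply FreeGroup.ext_hom; intro i; fin_cases i <;> simp [σh, τh, a, b]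

def σAut : F2 ≃* F2 := MonoidHom.toMulEquiv σh τh τσ στ

@[simp] lemma σAut_apply (v : F2) : σAut v = σh v := rfl
@[simp] lemma σAut_inv_apply (v : F2) : σAut⁻¹ v = τh v := rfl

lemma hconj6 : ((MulAut.conj u).toMonoidHom : F2 →* F2) =
    σh.comp (σh.comp (σh.comp (σh.comp (σh.comp σh)))) := by
  apply FreeGroup.ext_hom; intro i; fin_cases i <;> (simp [σh, u, a, b]; group)

def φ : Multiplicative ℤ →* MulAut F2 := zpowersHom _ σAut

abbrev Gsd := SemidirectProduct F2 (Multiplicative ℤ) φ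

open SemidirectProduct

def T : Multiplicative ℤ := Multiplicative.ofAdd 1

@[simp] lemma φT (v : F2) : φ T v = σh v := by
  simp [φ, T, zpowersHom_apply]

-- generators of B₃
def X : BraidGroup3 := PresentedGroup.of 0
def Y : BraidGroup3 := PresentedGroup.of 1

lemma braid : X * Y * X = Y * X * Y := by
  have h : (QuotientGroup.mk braidRel3 : PresentedGroup ({braidRel3} : Set (FreeGroup (Fin 2)))) = 1 := by
    rw [QuotientGroup.eq_one_iff]
    exact Subgroup.subset_normalClosure rfl
  have h2 : X * Y * X * (Y * X * Y)⁻¹ = 1 := by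
    exact h
  rw [mul_inv_eq_one] at h2; exact h2

-- the hom B₃ → Gsd
def fgen : Fin 2 → Gsd := ![inr T, inl a * inr T]

lemma inr_mul_inl (g : Multiplicative ℤ) (n : F2) :
    (inr g : Gsd) * inl n = inl (φ g n) * inr g := by
  rw [inl_aut]; simp [mul_assoc, ← map_mul]

lemma inr_mul_inl' (g : Multiplicative ℤ) (n : F2) (x : Gsd) :
    (inr g : Gsd) * (inl n * x) = inl (φ g n) * (inr g * x) := by
  rw [← mul_assoc, inr_mul_inl, mul_assoc]

lemma hrel : ∀ r ∈ ({braidRel3} : Set (FreeGroup (Fin 2))), FreeGroup.lift fgen r = 1 := by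
  intro r hr
  rw [Set.mem_singleton_iff] at hr
  subst hr
  rw [braidRel3]
  simp only [map_mul, map_inv, FreeGroup.lift_apply_of, fgen, Matrix.cons_val_zero, Matrix.cons_val_one,
    Matrix.head_cons]
  rw [mul_inv_eq_one]
  simp only [mul_assoc]
  simp only [inr_mul_inl']
  rw [← mul_assoc (inl a), ← map_mul]
  congr 1
  simp [σh, a, b]

def f : BraidGroup3 →* Gsd := PresentedGroup.toGroup hrel

@[simp] lemma fX : f X = inr T := PresentedGroup.toGroup.of hrel
@[simp] lemma fY : f Y = inl a * inr T := PresentedGroup.toGroup.of hrel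

-- the hom Gsd → B₃
def g₁ : F2 →* BraidGroup3 := FreeGroup.lift ![Y * X⁻¹, X * (Y * X⁻¹) * X⁻¹]
def g₂ : Multiplicative ℤ →* BraidGroup3 := zpowersHom _ X

lemma hbase : ((MulAut.conj X).toMonoidHom : BraidGroup3 →* BraidGroup3).comp g₁ = g₁.comp σh := by
  apply FreeGroup.ext_hom
  intro i
  have hb := braid
  fin_cases i
  · simp [g₁, σh, a, b]
  · simp [g₁, σh, a, b]
    have h2 : X * Y⁻¹ * (X * Y * X) = X * X * Y := by rw [hb]; group
    calc X * (X * (Y * X⁻¹) * X⁻¹) * X⁻¹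
        = (X * X * Y) * X⁻¹ * X⁻¹ * X⁻¹ := by group
      _ = (X * Y⁻¹ * (X * Y * X)) * X⁻¹ * X⁻¹ * X⁻¹ := by rw [h2]
      _ = X * Y⁻¹ * (X * (Y * X⁻¹) * X⁻¹) := by group

lemma hkey : ∀ (k : ℤ) (w : F2), X ^ k * g₁ w * X ^ (-k) = g₁ ((σAut ^ k) w) := by
  have h1 : ∀ w : F2, X * g₁ w * X⁻¹ = g₁ (σh w) := fun w =>
    DFunLike.congr_fun hbase w
  have h1' : ∀ w : F2, X⁻¹ * g₁ w * X = g₁ (τh w) := by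
    intro w
    have := h1 (τh w)
    rw [show σh (τh w) = w from DFunLike.congr_fun στ w] at this
    rw [← this]; group
  intro k
  induction k using Int.induction_on with
  | zero => simp
  | succ n ih =>
      intro w
      have e : (σAut ^ ((n : ℤ) + 1)) w = (σAut ^ (n : ℤ)) (σh w) := by
        rw [zpow_add_one]; simp [MulAut.mul_apply]
      rw [e, ← ih, ← h1]
      group
  | pred n ih =>
      intro w
      have e : (σAut ^ (-(n : ℤ) - 1)) w = (σAut ^ (-(n : ℤ))) (τh w) := by
        rw [zpow_sub_one]; simp [MulAut.mul_apply]; rfl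
      rw [e, ← ih, ← h1']
      group

def g : Gsd →* BraidGroup3 :=
  SemidirectProduct.lift g₁ g₂ (by
    intro m
    ext w
    simp only [MonoidHom.comp_apply, MulEquiv.coe_toMonoidHom, MulAut.conj_apply]
    have := hkey (Multiplicative.toAdd m) (FreeGroup.of w)
    rw [φ, zpowersHom_apply, ← this, g₂, zpowersHom_apply, zpow_neg])

@[simp] lemma g_inr (m : Multiplicative ℤ) : g (inr m) = X ^ Multiplicative.toAdd m := by
  simp [g, g₂, zpowersHom_apply]

@[simp] lemma g_inl (w : F2) : g (inl w) = g₁ w := by simp [g]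

lemma gf : g.comp f = MonoidHom.id _ := by
  apply PresentedGroup.ext
  intro i
  fin_cases i
  · show g (f X) = X
    simp [T]
  · show g (f Y) = Y
    simp [T, g₁, a]

lemma fg : f.comp g = MonoidHom.id _ := by
  apply SemidirectProduct.hom_ext
  · apply FreeGroup.ext_hom
    intro i
    fin_cases i
    · show f (g (inl a)) = inl a
      have : f (g (inl a)) = f Y * (f X)⁻¹ := by simp [g₁, a]
      rw [this]
      simp only [fX, fY]
      group
    · show f (g (inl b)) = inl b
      have : f (g (inl b)) = f X * (f Y * (f X)⁻¹) * (f X)⁻¹ := by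
        simp [g₁, b]
      rw [this]
      simp only [fX, fY]
      have h3 : (inr T : Gsd) * (inl a * inr T * (inr T)⁻¹) * (inr T)⁻¹ = inl (φ T a) := by
        simp only [inl_aut, map_inv]
        group
      rw [h3]
      simp [σh, a, b]
  · apply MonoidHom.ext_mint
    show f (g (inr (Multiplicative.ofAdd 1))) = inr (Multiplicative.ofAdd 1)
    simp [T]

def e : BraidGroup3 ≃* Gsd := MonoidHom.toMulEquiv f g gf fg

-- the quotient map to Z/6
def ρ : Multiplicative ℤ →* Multiplicative (ZMod 6) :=
  AddMonoidHom.toMultiplicative (Int.castAddHom (ZMod 6))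

def π : Gsd →* Multiplicative (ZMod 6) := ρ.comp rightHom

lemma hφ6 (v : F2) : φ (Multiplicative.ofAdd (6:ℤ)) v = u * v * u⁻¹ := by
  have h := DFunLike.congr_fun hconj6 v
  simp only [MonoidHom.comp_apply, MulEquiv.coe_toMonoidHom, MulAut.conj_apply] at h
  rw [φ, zpowersHom_apply, toAdd_ofAdd,
    show (6:ℤ) = ((6:ℕ):ℤ) from rfl, zpow_natCast]
  rw [show (6:ℕ) = 1+1+1+1+1+1 from rfl, pow_succ, pow_succ, pow_succ, pow_succ, pow_succ,
    pow_one]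
  simp only [MulAut.mul_apply, σAut_apply]
  exact h.symm

def z : Gsd := inl u⁻¹ * inr (Multiplicative.ofAdd 6)

set_option linter.unusedTactic false in
lemma hcom : Commute (inl u⁻¹ : Gsd) (inr (Multiplicative.ofAdd (6:ℤ))) := by
  show _ * _ = _ * _
  rw [inr_mul_inl, hφ6]
  congr 1
  group

lemma zpow_eq (k : ℤ) : z ^ k = inl (u ^ (-k)) * inr (Multiplicative.ofAdd (6 * k)) := by
  rw [z, hcom.mul_zpow, ← map_zpow, ← map_zpow]
  congr 1
  · congr 1
    rw [inv_zpow, ← zpow_neg]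
  · congr 1
    rw [show (6:ℤ) * k = k • (6:ℤ) by simp [smul_eq_mul, mul_comm], ofAdd_zsmul]

lemma z_comm (w : F2) : Commute z (inl w : Gsd) := by
  show _ * _ = _ * _
  rw [z, mul_assoc, inr_mul_inl, hφ6, ← mul_assoc, ← map_mul]
  rw [show u⁻¹ * (u * w * u⁻¹) = w * u⁻¹ by group]
  rw [map_mul, mul_assoc]

def χ : Multiplicative ℤ × F2 →* Gsd :=
  (zpowersHom Gsd z).noncommCoprod inl
    (fun m w => (z_comm w).zpow_left (Multiplicative.toAdd m))

lemma χ_apply (m : Multiplicative ℤ) (w : F2) :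
    χ (m, w) = z ^ (Multiplicative.toAdd m) * inl w := rfl

lemma πz : π z = 1 := by
  rw [z, π]
  simp only [MonoidHom.comp_apply, map_mul, rightHom_inl, rightHom_inr, one_mul]
  show Multiplicative.ofAdd ((6:ℤ) : ZMod 6) = 1
  decide

lemma π_inl (w : F2) : π (inl w) = 1 := by simp [π]

lemma hχinj : Function.Injective χ := by
  rw [injective_iff_map_eq_one]
  rintro ⟨m, w⟩ hp
  rw [χ_apply, zpow_eq] at hp
  have hr := congrArg rightHom hp
  simp only [map_mul, rightHom_inl, rightHom_inr, one_mul, mul_one, map_one] at hr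
  have hk : Multiplicative.toAdd m = 0 := by
    have : (6 : ℤ) * Multiplicative.toAdd m = 0 := by
      have := congrArg Multiplicative.toAdd hr
      simpa using this
    omega
  rw [hk] at hp
  simp only [neg_zero, zpow_zero, map_one, one_mul, mul_zero, ofAdd_zero, map_one, mul_one] at hp
  have hw : w = 1 := inl_injective hp
  have hm : m = 1 := by
    have : m = Multiplicative.ofAdd (0:ℤ) := by rw [← hk]; rfl
    simpa using this
  rw [hm, hw]; rfl

lemma hχrange : χ.range = π.ker := by
  ext g
  constructor
  · rintro ⟨⟨m, w⟩, rfl⟩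
    rw [MonoidHom.mem_ker, χ_apply, map_mul, map_zpow, πz, π_inl, one_zpow, one_mul]
  · intro hg
    rw [MonoidHom.mem_ker] at hg
    have h6 : ((Multiplicative.toAdd g.right : ℤ) : ZMod 6) = 0 := by
      have : π g = ρ g.right := by rw [π]; rfl
      rw [this] at hg
      have := congrArg Multiplicative.toAdd hg
      simpa [ρ] using this
    rw [ZMod.intCast_zmod_eq_zero_iff_dvd] at h6
    obtain ⟨k, hk0⟩ := h6
    have hk : Multiplicative.toAdd g.right = 6 * k := by exact_mod_cast hk0
    refine ⟨(Multiplicative.ofAdd k, g.left * u ^ k), ?_⟩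
    rw [χ_apply, toAdd_ofAdd, ((z_comm _).zpow_left k).eq, zpow_eq,
      ← mul_assoc, ← map_mul]
    rw [show g.left * u ^ k * u ^ (-k) = g.left by group]
    rw [show Multiplicative.ofAdd (6 * k) = g.right by rw [← hk]; simp]
    exact inl_left_mul_inr_right g

lemma hfsurj : Function.Surjective ⇑f := e.surjective

lemma hπsurj : Function.Surjective ⇑π := by
  apply Function.Surjective.comp (g := ⇑ρ)
  · intro c
    obtain ⟨k, hk⟩ := ZMod.intCast_surjective (Multiplicative.toAdd c)
    exact ⟨Multiplicative.ofAdd k, by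
      show Multiplicative.ofAdd ((k : ZMod 6)) = c
      rw [hk]; rfl⟩
  · exact rightHom_surjective

lemma hidx : (π.comp f).ker.index = 6 := by
  have hsurj : Function.Surjective ⇑(π.comp f) := by
    rw [MonoidHom.coe_comp]; exact hπsurj.comp hfsurj
  rw [Subgroup.index_ker, MonoidHom.range_eq_top.mpr hsurj, Subgroup.card_top]
  simp [Nat.card_eq_fintype_card]

lemma hmapker : Subgroup.map (e : BraidGroup3 →* Gsd) (π.comp f).ker = π.ker := by
  have h1 : (π.comp f).ker = Subgroup.comap (e : BraidGroup3 →* Gsd) π.ker := by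
    rw [MonoidHom.comap_ker]
    rfl
  rw [h1]
  exact Subgroup.map_comap_eq_self_of_surjective (by exact e.surjective) _

noncomputable def finalEquiv : (π.comp f).ker ≃* (Multiplicative ℤ × F2) :=
  ((e.subgroupMap (π.comp f).ker).trans (MulEquiv.subgroupCongr hmapker)).trans
    ((MulEquiv.subgroupCongr hχrange.symm).trans (MonoidHom.ofInjective hχinj).symm)

end B3x

theorem stmt_4 :
    ∃ H : Subgroup BraidGroup3, H ≠ ⊤ ∧ H.Normal ∧ H.index = 6 ∧
      Nonempty (H ≃* (Multiplicative ℤ × FreeGroup (Fin 2))) := by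
  open B3x in
  refine ⟨(π.comp f).ker, ?_, MonoidHom.normal_ker _, hidx, ⟨finalEquiv⟩⟩
  intro h
  have h6 := hidx
  rw [h, Subgroup.index_top] at h6
  omega
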